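/- arXiv:2304.00435 — 2 statements merged into one kernel-verified Lean document; each statement's English description precedes it below -/
import Mathlib

section
/- Let (x*, λ*) satisfy the KKT conditions of the parametric QP min (1/2)xᵀHx + fᵀx subject to Ax ≤ b + Cθ̃ at parameter θ̃, with active set A = {j : Aʲx* = bʲ + Cʲθ̃}. If the KKT coefficient matrix [[H, A_Aᵀ],[−A_A, 0]] is invertible, then the map θ ↦ (x(θ), λ_A(θ)) defined by solving the linear KKT equality system is affine in θ, and for every θ for which x(θ) is primal feasible and λ_A(θ) ≥ 0, x(θ) is optimal for the QP at parameter θ. -/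
open Matrix

/-- If the KKT coefficient matrix `[[H, A_Aᵀ],[−A_A, 0]]` for the active set `Act`
at a KKT point `(x⋆, λ⋆)` of the parametric QP `min (1/2)xᵀHx + fᵀx  s.t.  Ax ≤ b + Cθ`
is invertible, then the primal-dual solution map obtained by solving the linear KKT
equality system is affine in `θ`, and whenever the resulting point is primal feasible
with nonnegative active multipliers, it is optimal for the QP at that parameter. -/
theorem parametric_qp_affine_solution_map {n m d : ℕ}
    (H : Matrix (Fin n) (Fin n) ℝ) (hH : H.PosSemidef)
    (f : Fin n → ℝ) (A : Matrix (Fin m) (Fin n) ℝ) (b : Fin m → ℝ)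
    (C : Matrix (Fin m) (Fin d) ℝ) (θt : Fin d → ℝ)
    (xs : Fin n → ℝ) (ls : Fin m → ℝ)
    (Act : Finset (Fin m))
    -- `(xs, ls)` satisfies the KKT conditions at `θt`
    (hstat : H.mulVec xs + f + Aᵀ.mulVec ls = 0)
    (hfeas : A.mulVec xs ≤ b + C.mulVec θt)
    (hdual : 0 ≤ ls)
    (hcs : ∀ j, ls j * (A.mulVec xs j - b j - C.mulVec θt j) = 0)
    -- `Act` is the active set at `θt`
    (hAct : ∀ j : Fin m, j ∈ Act ↔ A.mulVec xs j = b j + C.mulVec θt j)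
    -- the KKT coefficient matrix and its invertibility
    (K : Matrix (Fin n ⊕ {j // j ∈ Act}) (Fin n ⊕ {j // j ∈ Act}) ℝ)
    (hK : K = Matrix.fromBlocks H (Matrix.of fun i (j : {j // j ∈ Act}) => A j.1 i)
        (Matrix.of fun (j : {j // j ∈ Act}) i => -A j.1 i) 0)
    (hKinv : IsUnit K.det)
    -- the parametric primal-dual solution map defined from the linear KKT system
    (sol : (Fin d → ℝ) → (Fin n ⊕ {j // j ∈ Act}) → ℝ)
    (hsol : ∀ θ, sol θ = K⁻¹.mulVec
        (Sum.elim (fun i => -f i) (fun (j : {j // j ∈ Act}) => -b j.1 - C.mulVec θ j.1))) :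
    -- the maps `θ ↦ x(θ)` and `θ ↦ λ_A(θ)` are affine in `θ`
    ((∃ (Tx : Matrix (Fin n) (Fin d) ℝ) (kx : Fin n → ℝ),
        ∀ θ, (fun i => sol θ (Sum.inl i)) = Tx.mulVec θ + kx) ∧
      (∃ (TA : Matrix {j // j ∈ Act} (Fin d) ℝ) (kA : {j // j ∈ Act} → ℝ),
        ∀ θ, (fun j => sol θ (Sum.inr j)) = TA.mulVec θ + kA)) ∧
    -- and wherever feasible with nonnegative multipliers, `x(θ)` is optimal
    (∀ θ : Fin d → ℝ,
      A.mulVec (fun i => sol θ (Sum.inl i)) ≤ b + C.mulVec θ →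
      (∀ j : {j // j ∈ Act}, 0 ≤ sol θ (Sum.inr j)) →
      ∀ y : Fin n → ℝ, A.mulVec y ≤ b + C.mulVec θ →
        (1/2) * ((fun i => sol θ (Sum.inl i)) ⬝ᵥ H.mulVec (fun i => sol θ (Sum.inl i)))
          + f ⬝ᵥ (fun i => sol θ (Sum.inl i))
        ≤ (1/2) * (y ⬝ᵥ H.mulVec y) + f ⬝ᵥ y) := by
  
  constructor
  · -- affinity of the solution map
    set M : Matrix (Fin n ⊕ {j // j ∈ Act}) (Fin d) ℝ :=
      Matrix.of (Sum.elim (fun _ _ => 0) (fun (j : {j // j ∈ Act}) k => -C j.1 k)) with hM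
    set c : (Fin n ⊕ {j // j ∈ Act}) → ℝ :=
      Sum.elim (fun i => -f i) (fun (j : {j // j ∈ Act}) => -b j.1) with hc
    have key : ∀ θ, sol θ = (K⁻¹ * M).mulVec θ + K⁻¹.mulVec c := by
      intro θ
      have hv : (Sum.elim (fun i => -f i) (fun (j : {j // j ∈ Act}) => -b j.1 - C.mulVec θ j.1))
          = M.mulVec θ + c := by
        funext s
        cases s with
        | inl i => simp [hM, hc, mulVec, dotProduct]
        | inr j =>
          simp [hM, hc, mulVec, dotProduct, Finset.sum_neg_distrib]
          ring
      rw [hsol, hv, mulVec_add, mulVec_mulVec]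
    constructor
    · exact ⟨Matrix.of fun i k => (K⁻¹ * M) (Sum.inl i) k, fun i => K⁻¹.mulVec c (Sum.inl i),
        fun θ => by funext i; rw [key θ]; simp [mulVec, dotProduct]⟩
    · exact ⟨Matrix.of fun j k => (K⁻¹ * M) (Sum.inr j) k, fun j => K⁻¹.mulVec c (Sum.inr j),
        fun θ => by funext j; rw [key θ]; simp [mulVec, dotProduct]⟩
  · -- optimality
    intro θ hfeasθ hdualθ y hy
    set x : Fin n → ℝ := fun i => sol θ (Sum.inl i) with hx
    set lA : {j // j ∈ Act} → ℝ := fun j => sol θ (Sum.inr j) with hlA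
    have hKsol : K.mulVec (sol θ) =
        Sum.elim (fun i => -f i) (fun (j : {j // j ∈ Act}) => -b j.1 - C.mulVec θ j.1) := by
      rw [hsol, mulVec_mulVec, Matrix.mul_nonsing_inv _ hKinv, one_mulVec]
    have hstat' : ∀ i, (H.mulVec x) i + f i + ∑ j : {j // j ∈ Act}, A j.1 i * lA j = 0 := by
      intro i
      have h := congrFun hKsol (Sum.inl i)
      rw [hK] at h
      simp only [mulVec, dotProduct, Fintype.sum_sum_type, fromBlocks_apply₁₁,
        fromBlocks_apply₁₂, Matrix.of_apply, Sum.elim_inl] at h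
      have h2 : (∑ j, H i j * x j) + ∑ j : {j // j ∈ Act}, A j.1 i * lA j = -f i := h
      simp only [mulVec, dotProduct]
      linarith
    have hact' : ∀ j : {j // j ∈ Act}, (A.mulVec x) j.1 = b j.1 + (C.mulVec θ) j.1 := by
      intro j
      have h := congrFun hKsol (Sum.inr j)
      rw [hK] at h
      simp only [mulVec, dotProduct, Fintype.sum_sum_type, fromBlocks_apply₂₁,
        fromBlocks_apply₂₂, Matrix.of_apply, Sum.elim_inr, Matrix.zero_apply, zero_mul,
        Finset.sum_const_zero, add_zero, neg_mul] at h
      simp only [mulVec, dotProduct, hx]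
      rw [Finset.sum_neg_distrib] at h
      linarith
    have hgrad : 0 ≤ (H.mulVec x + f) ⬝ᵥ (y - x) := by
      have heq : (H.mulVec x + f) ⬝ᵥ (y - x)
          = -∑ j : {j // j ∈ Act}, lA j * ((A.mulVec y) j.1 - (A.mulVec x) j.1) := by
        have hg : ∀ i, (H.mulVec x + f) i = -∑ j : {j // j ∈ Act}, A j.1 i * lA j := by
          intro i; have := hstat' i; simp only [Pi.add_apply]; linarith
        calc (H.mulVec x + f) ⬝ᵥ (y - x)
            = ∑ i, (-∑ j : {j // j ∈ Act}, A j.1 i * lA j) * (y i - x i) := by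
              simp only [dotProduct, Pi.sub_apply]
              exact Finset.sum_congr rfl fun i _ => by rw [hg i]
          _ = -∑ j : {j // j ∈ Act}, lA j * ((A.mulVec y) j.1 - (A.mulVec x) j.1) := by
              simp only [mulVec, dotProduct, neg_mul, Finset.sum_neg_distrib, Finset.mul_sum,
                Finset.sum_mul, ← Finset.sum_sub_distrib]
              rw [Finset.sum_comm]
              congr 1; apply Finset.sum_congr rfl; intro i _
              apply Finset.sum_congr rfl; intro j _; ring
      rw [heq, neg_nonneg]
      apply Finset.sum_nonpos
      intro j _
      apply mul_nonpos_of_nonneg_of_nonpos (hdualθ j)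
      have := hy j.1
      have := hact' j
      simp only [Pi.add_apply] at *
      linarith
    have hpsd : 0 ≤ (y - x) ⬝ᵥ H.mulVec (y - x) := by
      have := hH.dotProduct_mulVec_nonneg (y - x)
      simpa using this
    have hs : Hᵀ = H := by
      have := hH.1
      rwa [Matrix.IsHermitian, Matrix.conjTranspose_eq_transpose_of_trivial] at this
    have hsym : x ⬝ᵥ H.mulVec y = y ⬝ᵥ H.mulVec x := by
      simp only [dotProduct, mulVec, Finset.mul_sum]
      rw [Finset.sum_comm]
      apply Finset.sum_congr rfl; intro i _
      apply Finset.sum_congr rfl; intro j _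
      have hij : H j i = H i j := congrFun (congrFun hs i) j
      rw [hij]; ring
    have hexp : (y - x) ⬝ᵥ H.mulVec (y - x)
        = y ⬝ᵥ H.mulVec y - 2 * (x ⬝ᵥ H.mulVec y) + x ⬝ᵥ H.mulVec x := by
      rw [mulVec_sub, dotProduct_sub, sub_dotProduct, sub_dotProduct, hsym]
      ring
    have hexp2 : (H.mulVec x + f) ⬝ᵥ (y - x)
        = x ⬝ᵥ H.mulVec y - x ⬝ᵥ H.mulVec x + f ⬝ᵥ y - f ⬝ᵥ x := by
      rw [add_dotProduct, dotProduct_sub, dotProduct_sub, dotProduct_comm (H.mulVec x) y,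
        dotProduct_comm (H.mulVec x) x, hsym]
      ring
    rw [hexp] at hpsd
    rw [hexp2] at hgrad
    linarith
end

section
/- For the linear complementarity problem w = Mz + q, wᵀz = 0, w,z ≥ 0 with M positive semidefinite (vᵀMv ≥ 0 for all v), the solution set is convex; moreover if (w¹,z¹) and (w²,z²) are two solutions then (z¹ − z²)ᵀ(M + Mᵀ)(z¹ − z²) = 0 and (w¹)ᵀz² + (w²)ᵀz¹ = 0. -/
open Matrix

/-- For the LCP `w = Mz + q`, `wᵀz = 0`, `w, z ≥ 0` with `M` positive semidefinite
(`vᵀMv ≥ 0` for all `v`), the solution set is convex; moreover, any two solutions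
`(w¹,z¹)`, `(w²,z²)` satisfy `(z¹−z²)ᵀ(M+Mᵀ)(z¹−z²) = 0` and `(w¹)ᵀz² + (w²)ᵀz¹ = 0`. -/
theorem lcp_psd_solution_set_convex {p : ℕ}
    (M : Matrix (Fin p) (Fin p) ℝ)
    (hM : ∀ v : Fin p → ℝ, 0 ≤ v ⬝ᵥ M.mulVec v)
    (q : Fin p → ℝ)
    (Sol : Set ((Fin p → ℝ) × (Fin p → ℝ)))
    (hSol : Sol = {wz | wz.1 = M.mulVec wz.2 + q ∧ 0 ≤ wz.1 ∧ 0 ≤ wz.2 ∧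
        wz.1 ⬝ᵥ wz.2 = 0}) :
    Convex ℝ Sol ∧
    ∀ w₁ z₁ w₂ z₂ : Fin p → ℝ, (w₁, z₁) ∈ Sol → (w₂, z₂) ∈ Sol →
      (z₁ - z₂) ⬝ᵥ (M + Mᵀ).mulVec (z₁ - z₂) = 0 ∧
      w₁ ⬝ᵥ z₂ + w₂ ⬝ᵥ z₁ = 0 := by
  subst hSol
  -- key cross-orthogonality lemma
  have key : ∀ w₁ z₁ w₂ z₂ : Fin p → ℝ,
      (w₁ = M.mulVec z₁ + q ∧ 0 ≤ w₁ ∧ 0 ≤ z₁ ∧ w₁ ⬝ᵥ z₁ = 0) →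
      (w₂ = M.mulVec z₂ + q ∧ 0 ≤ w₂ ∧ 0 ≤ z₂ ∧ w₂ ⬝ᵥ z₂ = 0) →
      w₁ ⬝ᵥ z₂ = 0 ∧ w₂ ⬝ᵥ z₁ = 0 ∧ (z₁ - z₂) ⬝ᵥ M.mulVec (z₁ - z₂) = 0 := by
    rintro w₁ z₁ w₂ z₂ ⟨h1, hw1, hz1, ho1⟩ ⟨h2, hw2, hz2, ho2⟩
    have hdiff : M.mulVec (z₁ - z₂) = w₁ - w₂ := by
      rw [Matrix.mulVec_sub, h1, h2]; abel
    have hq : 0 ≤ (z₁ - z₂) ⬝ᵥ M.mulVec (z₁ - z₂) := hM _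
    have expand : (z₁ - z₂) ⬝ᵥ M.mulVec (z₁ - z₂) = -(w₁ ⬝ᵥ z₂ + w₂ ⬝ᵥ z₁) := by
      rw [hdiff, sub_dotProduct, dotProduct_sub, dotProduct_sub,
        dotProduct_comm z₁ w₁, dotProduct_comm z₁ w₂, dotProduct_comm z₂ w₁,
        dotProduct_comm z₂ w₂, ho1, ho2]
      ring
    have n1 : 0 ≤ w₁ ⬝ᵥ z₂ :=
      Finset.sum_nonneg fun i _ => mul_nonneg (hw1 i) (hz2 i)
    have n2 : 0 ≤ w₂ ⬝ᵥ z₁ :=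
      Finset.sum_nonneg fun i _ => mul_nonneg (hw2 i) (hz1 i)
    have hsum : w₁ ⬝ᵥ z₂ + w₂ ⬝ᵥ z₁ = 0 := by
      have : 0 ≤ -(w₁ ⬝ᵥ z₂ + w₂ ⬝ᵥ z₁) := expand ▸ hq
      linarith [add_nonneg n1 n2]
    have e1 : w₁ ⬝ᵥ z₂ = 0 := by linarith
    have e2 : w₂ ⬝ᵥ z₁ = 0 := by linarith
    exact ⟨e1, e2, by rw [expand, hsum, neg_zero]⟩
  constructor
  · rintro ⟨w₁, z₁⟩ h₁ ⟨w₂, z₂⟩ h₂ a b ha hb hab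
    obtain ⟨h1, hw1, hz1, ho1⟩ := h₁
    obtain ⟨h2, hw2, hz2, ho2⟩ := h₂
    dsimp only at h1 hw1 hz1 ho1 h2 hw2 hz2 ho2
    obtain ⟨e1, e2, -⟩ := key w₁ z₁ w₂ z₂ ⟨h1, hw1, hz1, ho1⟩ ⟨h2, hw2, hz2, ho2⟩
    refine ⟨?_, ?_, ?_, ?_⟩
    · show a • w₁ + b • w₂ = M.mulVec (a • z₁ + b • z₂) + q
      have hq : a • q + b • q = q := by rw [← add_smul, hab, one_smul]
      rw [h1, h2, Matrix.mulVec_add, Matrix.mulVec_smul, Matrix.mulVec_smul,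
        smul_add, smul_add]
      conv_rhs => rw [← hq]
      abel
    · exact add_nonneg (smul_nonneg ha hw1) (smul_nonneg hb hw2)
    · exact add_nonneg (smul_nonneg ha hz1) (smul_nonneg hb hz2)
    · show (a • w₁ + b • w₂) ⬝ᵥ (a • z₁ + b • z₂) = 0
      simp [add_dotProduct, dotProduct_add, smul_dotProduct, dotProduct_smul,
        ho1, ho2, e1, e2]
  · rintro w₁ z₁ w₂ z₂ h₁ h₂
    obtain ⟨e1, e2, e3⟩ := key w₁ z₁ w₂ z₂ h₁ h₂
    refine ⟨?_, by rw [e1, e2, add_zero]⟩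
    rw [Matrix.add_mulVec, dotProduct_add, Matrix.mulVec_transpose,
      dotProduct_comm _ (M.vecMul _), ← Matrix.dotProduct_mulVec, e3, add_zero]
end
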